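/- For every real number a > (ln 3 - ln 4)/(ln(ln 2) - ln(ln 3)) (≈ 0.6246), the quantities ξ_1 = (2/3)(3(ln 2)^a - 2(ln 4)^a) and ξ_2 = (1/3)(9(ln 3)^a - 8(ln 4)^a) satisfy ξ_1 < 0, ξ_2 < 0 and 2ξ_2 < ξ_1 < ξ_2/2. -/

import Mathlib

open Real
set_option maxHeartbeats 2000000 in

theorem stmt_16 (a : ℝ)
    (ha : (Real.log 3 - Real.log 4) / (Real.log (Real.log 2) - Real.log (Real.log 3)) < a) :
    let ξ₁ : ℝ := 2 * (3 * (Real.log 2) ^ a - 2 * (Real.log 4) ^ a) / 3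
    let ξ₂ : ℝ := (9 * (Real.log 3) ^ a - 8 * (Real.log 4) ^ a) / 3
    ξ₁ < 0 ∧ ξ₂ < 0 ∧ 2 * ξ₂ < ξ₁ ∧ ξ₁ < ξ₂ / 2 := by
  intro ξ₁ ξ₂
  have h2 : (0:ℝ) < log 2 := log_pos (by norm_num)
  have h3 : (0:ℝ) < log 3 := log_pos (by norm_num)
  set k : ℝ := log 3 / log 2 with hk
  have hk1 : 1 < k := (one_lt_div h2).2 (log_lt_log (by norm_num) (by norm_num))
  have hkpos : 0 < k := by linarith
  have hlogk : 0 < log k := log_pos hk1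
  -- 29 log 3 < 46 log 2 since 3^29 < 2^46
  have h2946 : 29 * log 3 < 46 * log 2 := by
    have h := log_lt_log (by positivity) (show (3:ℝ)^(29:ℕ) < 2^(46:ℕ) by norm_num)
    rw [log_pow, log_pow] at h
    push_cast at h
    linarith
  have hk46 : k < 46/29 := by
    rw [hk, div_lt_div_iff₀ h2 (by norm_num)]
    linarith
  -- 3 log k < 2 log 2 since (46/29)^3 < 4
  have hlogk_lt : 3 * log k < 2 * log 2 := by
    have h1 : log k < log (46/29) := log_lt_log hkpos hk46
    have h2' : log (((46:ℝ)/29)^(3:ℕ)) < log ((2:ℝ)^(2:ℕ)) :=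
      log_lt_log (by positivity) (by norm_num)
    rw [log_pow, log_pow] at h2'
    push_cast at h2'
    linarith
  have l32 : (0:ℝ) < log (3/2) := log_pos (by norm_num)
  have l43 : (0:ℝ) < log (4/3) := log_pos (by norm_num)
  -- 2 log(3/2) < 3 log(4/3) since (3/2)^2 < (4/3)^3
  have h2332 : 2 * log (3/2) < 3 * log (4/3) := by
    have h := log_lt_log (by positivity) (show ((3:ℝ)/2)^(2:ℕ) < ((4:ℝ)/3)^(3:ℕ) by norm_num)
    rw [log_pow, log_pow] at h
    push_cast at h
    linarith
  -- key inequality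
  have key : log (3/2) * log k < log (4/3) * log 2 := by
    nlinarith [mul_lt_mul_of_pos_left hlogk_lt l32, mul_lt_mul_of_pos_right h2332 h2]
  -- rewrite the hypothesis
  have ha' : log (4/3) < a * log k := by
    have hd : Real.log (Real.log 2) - Real.log (Real.log 3) = -log k := by
      rw [hk, log_div h3.ne' h2.ne']; ring
    have hn : Real.log 3 - Real.log 4 = -log (4/3) := by
      rw [log_div (by norm_num) (by norm_num)]; ring
    rw [hd, hn, neg_div_neg_eq] at ha
    exact (div_lt_iff₀ hlogk).1 ha
  have halog2 : log (3/2) < a * log 2 := by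
    have h := mul_lt_mul_of_pos_right ha' h2
    -- log(4/3)*log 2 < a*log k*log 2, and log(3/2)*log k < log(4/3)*log 2
    have h' : log (3/2) * log k < (a * log 2) * log k := by nlinarith
    exact lt_of_mul_lt_mul_right h' hlogk.le
  have h98 : log (9/8) < a * (log 2 - log k) := by
    have h98e : log ((9:ℝ)/8) = log (3/2) - log (4/3) := by
      rw [show (9:ℝ)/8 = (3/2)/(4/3) by norm_num, log_div (by norm_num) (by norm_num)]
    have hlk2 : log k < log 2 := by linarith
    have h := mul_lt_mul_of_pos_right ha' (show (0:ℝ) < log 2 - log k by linarith)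
    have h' : log (9/8) * log k < (a * (log 2 - log k)) * log k := by
      rw [h98e]; nlinarith
    exact lt_of_mul_lt_mul_right h' hlogk.le
  -- abbreviations
  set X : ℝ := (log 2) ^ a with hX
  set T : ℝ := (2:ℝ) ^ a with hT
  set S : ℝ := k ^ a with hS
  have hXpos : 0 < X := rpow_pos_of_pos h2 a
  have hSpos : 0 < S := rpow_pos_of_pos hkpos a
  have hT32 : (3:ℝ)/2 < T :=
    (lt_rpow_iff_log_lt (by norm_num) (by norm_num)).2 halog2
  have hS43 : (4:ℝ)/3 < S :=
    (lt_rpow_iff_log_lt (by norm_num) hkpos).2 ha'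
  have hTS : 9 * S < 8 * T := by
    have h1 : (9:ℝ)/8 < (2/k) ^ a := by
      refine (lt_rpow_iff_log_lt (by norm_num) (by positivity)).2 ?_
      rwa [log_div (by norm_num) hkpos.ne']
    rw [div_rpow (by norm_num) hkpos.le, lt_div_iff₀ hSpos] at h1
    linarith
  -- the hard inequality: 3 S < 1 + 2 T
  have hhard : 3 * S < 1 + 2 * T := by
    have hs1 : (1:ℝ) < S := by linarith
    have key3 : 3 * S < 1 + 2 * S ^ ((3:ℝ)/2) := by
      set u : ℝ := Real.sqrt S with hu
      have hu2 : u ^ 2 = S := Real.sq_sqrt hSpos.le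
      have hu1 : 1 < u := by
        nlinarith [Real.sqrt_nonneg S]
      have h32 : S ^ ((3:ℝ)/2) = u ^ 3 := by
        rw [hu, Real.sqrt_eq_rpow, ← Real.rpow_natCast (S ^ ((1:ℝ)/2)) 3,
          ← Real.rpow_mul hSpos.le]
        norm_num
      rw [h32, ← hu2]
      nlinarith [mul_pos (pow_pos (sub_pos.2 hu1) 2) (show (0:ℝ) < 2*u+1 by linarith)]
    have hexp : S ^ ((3:ℝ)/2) ≤ S ^ (log 2 / log k) := by
      refine rpow_le_rpow_of_exponent_le hs1.le ?_
      rw [le_div_iff₀ hlogk]; linarith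
    have hSb : S ^ (log 2 / log k) = T := by
      rw [hS, ← Real.rpow_mul hkpos.le, hT,
        Real.rpow_def_of_pos hkpos, Real.rpow_def_of_pos (show (0:ℝ) < 2 by norm_num)]
      congr 1
      field_simp
    rw [hSb] at hexp
    linarith
  -- express log 3, log 4 powers
  have hL4 : (Real.log 4) ^ a = T * X := by
    have h4 : Real.log 4 = 2 * log 2 := by
      rw [show (4:ℝ) = 2^(2:ℕ) by norm_num, log_pow]; push_cast; ring
    rw [h4, mul_rpow (by norm_num) h2.le, ← hT, ← hX]
  have hL3 : (Real.log 3) ^ a = S * X := by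
    have h3e : Real.log 3 = k * log 2 := by
      rw [hk, div_mul_cancel₀ _ h2.ne']
    rw [h3e, mul_rpow hkpos.le h2.le, ← hS, ← hX]
  refine ⟨?_, ?_, ?_, ?_⟩
  · show 2 * (3 * (Real.log 2) ^ a - 2 * (Real.log 4) ^ a) / 3 < 0
    rw [hL4, ← hX]
    nlinarith [mul_pos (show (0:ℝ) < 2*T-3 by linarith) hXpos]
  · show (9 * (Real.log 3) ^ a - 8 * (Real.log 4) ^ a) / 3 < 0
    rw [hL3, hL4]
    nlinarith [mul_pos (show (0:ℝ) < 8*T-9*S by linarith) hXpos]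
  · show 2 * ((9 * (Real.log 3) ^ a - 8 * (Real.log 4) ^ a) / 3)
        < 2 * (3 * (Real.log 2) ^ a - 2 * (Real.log 4) ^ a) / 3
    rw [hL3, hL4, ← hX]
    nlinarith [mul_pos (show (0:ℝ) < 6+12*T-18*S by linarith) hXpos]
  · show 2 * (3 * (Real.log 2) ^ a - 2 * (Real.log 4) ^ a) / 3
        < (9 * (Real.log 3) ^ a - 8 * (Real.log 4) ^ a) / 3 / 2
    rw [hL3, hL4, ← hX]
    nlinarith [mul_pos (show (0:ℝ) < 9*S-12 by linarith) hXpos]
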